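/- Let q be a real number with 0 < q and q ≠ 1, let n be an even positive integer, and let m ≥ 0 be an integer. Then q^n E_{m,q}(n) − E_{m,q} = [2]_q·∑_{l=0}^{n−1} (−1)^{l−1} q^l [l]_q^m (with the convention [0]_q^0 = 1). -/

import Mathlib

open Finset


/-- Kim's `q`-Euler polynomials
`E_{m,q}(x) = [2]_q (1/(1-q))^m ∑_{l=0}^m C(m,l) (-1)^l q^{lx}/(1+q^{l+1})`
(here `q ^ ((l : ℝ) * x)` is the real power `rpow`). -/
noncomputable def kimqEulerPoly (q : ℝ) (m : ℕ) (x : ℝ) : ℝ :=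
  (1 + q) * (1 / (1 - q)) ^ m *
    ∑ l ∈ Finset.range (m + 1),
      (m.choose l : ℝ) * (-1) ^ l * q ^ ((l : ℝ) * x) / (1 + q ^ (l + 1))

lemma alt_geom (t : ℝ) {n : ℕ} (hne : Even n) :
    (1 + t) * ∑ j ∈ range n, (-1 : ℝ) ^ (j + 1) * t ^ j = t ^ n - 1 := by
  have h := geom_sum_mul (-t) n
  have h2 : ∑ j ∈ range n, (-1 : ℝ) ^ (j + 1) * t ^ j = -∑ j ∈ range n, (-t) ^ j := by
    rw [← Finset.sum_neg_distrib]
    refine Finset.sum_congr rfl fun j _ => ?_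
    rw [neg_pow]; ring
  rw [h2, hne.neg_pow] at *
  linear_combination h

/-- Lemma 4 (even case): for even positive `n`,
`q^n E_{m,q}(n) - E_{m,q} = [2]_q ∑_{l=0}^{n-1} (-1)^{l-1} q^l [l]_q^m`
(with `(-1)^{l-1}` written as `(-1)^{l+1}`, to which it is equal). -/
theorem kimqEuler_even_sum (q : ℝ) (hq0 : 0 < q) (hq1 : q ≠ 1)
    (n : ℕ) (hn : 0 < n) (hne : Even n) (m : ℕ) :
    q ^ n * kimqEulerPoly q m (n : ℝ) - kimqEulerPoly q m 0 =
      (1 + q) * ∑ l ∈ Finset.range n, (-1) ^ (l + 1) * q ^ l * ((1 - q ^ l) / (1 - q)) ^ m := by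
  have hd : ∀ l : ℕ, (1 + q ^ (l + 1)) ≠ 0 := fun l => ne_of_gt (by positivity)
  have h1q : (1 : ℝ) - q ≠ 0 := sub_ne_zero.mpr (Ne.symm hq1)
  have hbin : ∀ j : ℕ,
      ∑ l ∈ range (m + 1), (m.choose l : ℝ) * (-1) ^ l * (q ^ j) ^ l = (1 - q ^ j) ^ m := by
    intro j
    rw [show (1 : ℝ) - q ^ j = -(q ^ j) + 1 by ring, add_pow]
    refine Finset.sum_congr rfl fun l _ => ?_
    rw [neg_pow]; ring
  unfold kimqEulerPoly
  have hrestr : ∀ A B : ℝ,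
      q ^ n * ((1 + q) * (1 / (1 - q)) ^ m * A) - (1 + q) * (1 / (1 - q)) ^ m * B
        = (1 + q) * (1 / (1 - q)) ^ m * (q ^ n * A - B) := fun A B => by ring
  rw [hrestr, Finset.mul_sum, ← Finset.sum_sub_distrib]
  have hterm : ∀ l : ℕ,
      q ^ n * ((m.choose l : ℝ) * (-1) ^ l * q ^ ((l : ℝ) * (n : ℝ)) / (1 + q ^ (l + 1)))
        - (m.choose l : ℝ) * (-1) ^ l * q ^ ((l : ℝ) * (0 : ℝ)) / (1 + q ^ (l + 1))
      = (m.choose l : ℝ) * (-1) ^ l *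
          ∑ j ∈ range n, (-1 : ℝ) ^ (j + 1) * (q ^ (l + 1)) ^ j := by
    intro l
    have hr : q ^ ((l : ℝ) * (n : ℝ)) = q ^ (l * n) := by
      rw [show ((l : ℝ) * (n : ℝ)) = ((l * n : ℕ) : ℝ) by push_cast; ring,
        Real.rpow_natCast]
    have hr0 : q ^ ((l : ℝ) * (0 : ℝ)) = 1 := by
      rw [mul_zero, Real.rpow_zero]
    have hg := alt_geom (q ^ (l + 1)) hne
    rw [hr, hr0]
    have hpow : q ^ n * q ^ (l * n) = (q ^ (l + 1)) ^ n := by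
      rw [← pow_mul, ← pow_add]; ring_nf
    rw [mul_div_assoc', div_sub_div_same, div_eq_iff (hd l)]
    linear_combination (-((m.choose l : ℝ) * (-1) ^ l)) * hg
      + ((m.choose l : ℝ) * (-1) ^ l) * hpow
  rw [Finset.sum_congr rfl fun l _ => hterm l]
  have hswap :
      ∑ l ∈ range (m + 1), (m.choose l : ℝ) * (-1) ^ l *
          ∑ j ∈ range n, (-1 : ℝ) ^ (j + 1) * (q ^ (l + 1)) ^ j
      = ∑ j ∈ range n, (-1 : ℝ) ^ (j + 1) * q ^ j * (1 - q ^ j) ^ m := by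
    simp_rw [Finset.mul_sum]
    rw [Finset.sum_comm]
    refine Finset.sum_congr rfl fun j _ => ?_
    rw [← hbin j, Finset.mul_sum]
    refine Finset.sum_congr rfl fun l _ => ?_
    rw [← pow_mul q (l + 1) j, ← pow_mul q j l, show (l + 1) * j = j + j * l by ring, pow_add]
    ring
  rw [hswap, Finset.mul_sum, Finset.mul_sum]
  refine Finset.sum_congr rfl fun j _ => ?_
  rw [div_pow]
  field_simp
  rw [one_pow, ← mul_pow, mul_div_assoc', mul_div_cancel_left₀ _ h1q, one_mul]
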